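/- For fixed m as n → ∞, the optimal adversarial maximum score satisfies min_S max_G E[C_{m,n}(G,S)] = max_G E[C_{m,n}(G, G_greedy)] ~ log n, where the deck holds m copies of each of n card types. -/

import Mathlib

open Finset MeasureTheory Set

abbrev Deck (n : ℕ) := Fin n → ℕ
abbrev Strat (n : ℕ) := Deck n → Fin n → ℝ

/-- Remove one copy of card type `j` from the deck. -/
def Deck.sub {n : ℕ} (d : Deck n) (j : Fin n) : Deck n :=
  fun i => if i = j then d i - 1 else d i

/-- `p` is a probability distribution on `Fin n`. -/
def IsDist {n : ℕ} (p : Fin n → ℝ) : Prop :=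
  (∀ i, 0 ≤ p i) ∧ ∑ i, p i = 1

/-- A Guesser strategy outputs a distribution on card types for each nonzero deck. -/
def IsGuesser {n : ℕ} (G : Strat n) : Prop :=
  ∀ d : Deck n, d ≠ 0 → IsDist (G d)

/-- A Shuffler strategy outputs a distribution supported on the support of the deck. -/
def IsShuffler {n : ℕ} (S : Strat n) : Prop :=
  ∀ d : Deck n, d ≠ 0 → IsDist (S d) ∧ ∀ i, S d i ≠ 0 → d i ≠ 0

/-- Expected score of the game, computed with fuel `N` (the number of cards). -/
def scoreAux {n : ℕ} (G S : Strat n) : ℕ → Deck n → ℝ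
  | 0, _ => 0
  | N + 1, d => ∑ j ∈ Finset.univ.filter (fun j => d j ≠ 0),
      S d j * (G d j + scoreAux G S N (d.sub j))

/-- The expected score `E[C(d,G,S)]`. -/
noncomputable def score {n : ℕ} (G S : Strat n) (d : Deck n) : ℝ :=
  scoreAux G S (∑ i, d i) d

/-- `f(d,S)`: maximum expected score over all Guesser strategies. -/
noncomputable def fval {n : ℕ} (S : Strat n) (d : Deck n) : ℝ :=
  sSup {x | ∃ G, IsGuesser G ∧ score G S d = x}

/-- `F(d,S)`: minimum expected score over all Guesser strategies. -/
noncomputable def Fval {n : ℕ} (S : Strat n) (d : Deck n) : ℝ :=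
  sInf {x | ∃ G, IsGuesser G ∧ score G S d = x}

/-- `f(d) = min_S f(d,S)`. -/
noncomputable def fopt {n : ℕ} (d : Deck n) : ℝ :=
  sInf {x | ∃ S, IsShuffler S ∧ fval S d = x}

/-- `F(d) = max_S F(d,S)`. -/
noncomputable def Fopt {n : ℕ} (d : Deck n) : ℝ :=
  sSup {x | ∃ S, IsShuffler S ∧ Fval S d = x}

/-- The greedy Shuffler strategy: uniform on the support of the deck. -/
noncomputable def greedy {n : ℕ} : Strat n :=
  fun d i => if d i ≠ 0 then ((Finset.univ.filter fun j => d j ≠ 0).card : ℝ)⁻¹ else 0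


section aux

noncomputable def pfn (c : ℕ) (t : ℝ) : ℝ :=
  Real.exp (-t) * ∑ j ∈ Finset.range c, t ^ j / j.factorial

lemma pfn_zero (t : ℝ) : pfn 0 t = 0 := by simp [pfn]

lemma pfn_nonneg {c : ℕ} {t : ℝ} (ht : 0 ≤ t) : 0 ≤ pfn c t := by
  apply mul_nonneg (Real.exp_nonneg _)
  exact Finset.sum_nonneg fun j _ => div_nonneg (pow_nonneg ht _) (by positivity)

lemma pfn_le_one {c : ℕ} {t : ℝ} (ht : 0 ≤ t) : pfn c t ≤ 1 := by
  have h := Real.sum_le_exp_of_nonneg ht c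
  have : pfn c t ≤ Real.exp (-t) * Real.exp t := by
    unfold pfn
    exact mul_le_mul_of_nonneg_left h (Real.exp_nonneg _)
  simpa [← Real.exp_add] using this

lemma pfn_mono {c c' : ℕ} (h : c ≤ c') {t : ℝ} (ht : 0 ≤ t) : pfn c t ≤ pfn c' t := by
  apply mul_le_mul_of_nonneg_left _ (Real.exp_nonneg _)
  exact Finset.sum_le_sum_of_subset_of_nonneg (Finset.range_subset_range.2 h)
    (fun j _ _ => div_nonneg (pow_nonneg ht _) (by positivity))

lemma pfn_at_zero {c : ℕ} (hc : 0 < c) : pfn c 0 = 1 := by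
  unfold pfn
  rw [Finset.sum_eq_single 0]
  · simp
  · intro j _ hj; simp [zero_pow hj]
  · intro h; simp at h; omega

lemma hasDerivAt_pfn (c : ℕ) (t : ℝ) :
    HasDerivAt (pfn c) (pfn (c - 1) t - pfn c t) t := by
  have hexp : HasDerivAt (fun t : ℝ => Real.exp (-t)) (-Real.exp (-t)) t := by
    simpa [Function.comp_def] using (Real.hasDerivAt_exp (-t)).comp t (hasDerivAt_neg t)
  have hsum : HasDerivAt (fun t : ℝ => ∑ j ∈ Finset.range c, t ^ j / j.factorial)
      (∑ j ∈ Finset.range (c - 1), t ^ j / j.factorial) t := by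
    have h1 : HasDerivAt (fun t : ℝ => ∑ j ∈ Finset.range c, t ^ j / j.factorial)
        (∑ j ∈ Finset.range c, (j : ℝ) * t ^ (j - 1) / j.factorial) t := by
      apply HasDerivAt.fun_sum
      intro j _
      simpa [div_eq_mul_inv, mul_comm, mul_assoc, mul_left_comm] using
        (hasDerivAt_pow j t).div_const (j.factorial : ℝ)
    convert h1 using 1
    cases c with
    | zero => simp
    | succ c =>
      rw [Finset.sum_range_succ' (fun j => (j : ℝ) * t ^ (j - 1) / j.factorial) c]
      simp only [Nat.succ_sub_one, Nat.cast_zero, zero_mul, zero_div, add_zero,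
        Nat.add_sub_cancel]
      refine Finset.sum_congr rfl (fun j _ => ?_)
      push_cast [Nat.factorial_succ]
      field_simp
  have := hexp.mul hsum
  refine this.congr_deriv ?_
  unfold pfn
  ring

lemma continuous_pfn (c : ℕ) : Continuous (pfn c) := by
  unfold pfn
  exact (Real.continuous_exp.comp continuous_neg).mul
    (continuous_finset_sum _ fun j _ => (continuous_pow j).div_const _)

lemma tendsto_pfn_atTop (c : ℕ) : Filter.Tendsto (pfn c) Filter.atTop (nhds 0) := by
  unfold pfn
  have : Filter.Tendsto (fun t : ℝ => ∑ j ∈ Finset.range c, t ^ j * Real.exp (-t) / j.factorial)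
      Filter.atTop (nhds 0) := by
    have := tendsto_finset_sum (Finset.range c)
      (fun j _ => (Real.tendsto_pow_mul_exp_neg_atTop_nhds_zero j).div_const (j.factorial : ℝ))
    simpa using this
  refine this.congr (fun t => ?_)
  rw [Finset.mul_sum]
  exact Finset.sum_congr rfl fun j _ => by ring

lemma pfn_le_exp_half {c : ℕ} {t : ℝ} (ht : 0 ≤ t) :
    pfn c t ≤ (2:ℝ) ^ c * Real.exp (-(2⁻¹ * t)) := by
  have hterm : ∀ j ∈ Finset.range c, t ^ j / (j.factorial : ℝ) ≤ 2 ^ j * Real.exp (t / 2) := by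
    intro j _
    have h1 : (t / 2) ^ j / (j.factorial : ℝ) ≤ Real.exp (t / 2) := by
      calc (t / 2) ^ j / (j.factorial : ℝ)
          ≤ ∑ i ∈ Finset.range (j + 1), (t / 2) ^ i / i.factorial := by
            exact Finset.single_le_sum
              (f := fun i => (t/2) ^ i / (i.factorial : ℝ))
              (fun i _ => div_nonneg (pow_nonneg (by linarith : (0:ℝ) ≤ t/2) _) (by positivity))
              (Finset.self_mem_range_succ j)
        _ ≤ Real.exp (t / 2) := Real.sum_le_exp_of_nonneg (by linarith) _
    have : t ^ j / (j.factorial : ℝ) = 2 ^ j * ((t / 2) ^ j / (j.factorial : ℝ)) := by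
      rw [div_pow]; field_simp
    rw [this]
    exact mul_le_mul_of_nonneg_left h1 (by positivity)
  have hsum : ∑ j ∈ Finset.range c, t ^ j / (j.factorial : ℝ)
      ≤ (2:ℝ) ^ c * Real.exp (t / 2) := by
    calc ∑ j ∈ Finset.range c, t ^ j / (j.factorial : ℝ)
        ≤ ∑ j ∈ Finset.range c, 2 ^ j * Real.exp (t / 2) := Finset.sum_le_sum hterm
      _ = (∑ j ∈ Finset.range c, (2:ℝ) ^ j) * Real.exp (t / 2) := by rw [Finset.sum_mul]
      _ ≤ (2:ℝ) ^ c * Real.exp (t / 2) := by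
          apply mul_le_mul_of_nonneg_right _ (Real.exp_nonneg _)
          rw [geom_sum_eq (by norm_num : (2:ℝ) ≠ 1)]
          norm_num
  calc pfn c t ≤ Real.exp (-t) * ((2:ℝ) ^ c * Real.exp (t / 2)) :=
        mul_le_mul_of_nonneg_left hsum (Real.exp_nonneg _)
    _ = (2:ℝ) ^ c * Real.exp (-(2⁻¹ * t)) := by
        rw [mul_left_comm, ← Real.exp_add]
        norm_num
        ring_nf

lemma integrableOn_pfn (c : ℕ) : IntegrableOn (pfn c) (Ioi (0:ℝ)) := by
  apply Integrable.mono' ((exp_neg_integrableOn_Ioi 0 (by norm_num : (0:ℝ) < 2⁻¹)).smul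
    ((2:ℝ) ^ c))
  · exact ((continuous_pfn c).aestronglyMeasurable).restrict
  · filter_upwards [ae_restrict_mem measurableSet_Ioi] with t ht
    rw [Real.norm_eq_abs, abs_of_nonneg (pfn_nonneg (le_of_lt ht))]
    simpa using pfn_le_exp_half (le_of_lt ht)

variable {n : ℕ}

noncomputable def Fd (d : Deck n) (t : ℝ) : ℝ := ∏ i, (1 - pfn (d i) t)

noncomputable def Vd (d : Deck n) : ℝ := ∫ t in Ioi (0:ℝ), (1 - Fd d t)

lemma Fd_nonneg {d : Deck n} {t : ℝ} (ht : 0 ≤ t) : 0 ≤ Fd d t :=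
  Finset.prod_nonneg fun i _ => by linarith [pfn_le_one (c := d i) ht]

lemma Fd_le_one {d : Deck n} {t : ℝ} (ht : 0 ≤ t) : Fd d t ≤ 1 :=
  Finset.prod_le_one (fun i _ => by linarith [pfn_le_one (c := d i) ht])
    (fun i _ => by linarith [pfn_nonneg (c := d i) ht])

lemma continuous_Fd (d : Deck n) : Continuous (Fd d) :=
  continuous_finset_prod _ fun i _ => continuous_const.sub (continuous_pfn _)

lemma Fd_at_zero {d : Deck n} (hd : d ≠ 0) : Fd d 0 = 0 := by
  obtain ⟨i, hi⟩ := Function.ne_iff.1 hd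
  exact Finset.prod_eq_zero (Finset.mem_univ i)
    (by rw [pfn_at_zero (Nat.pos_of_ne_zero hi)]; ring)

lemma tendsto_Fd_atTop (d : Deck n) : Filter.Tendsto (Fd d) Filter.atTop (nhds 1) := by
  have := tendsto_finset_prod (Finset.univ : Finset (Fin n))
    (fun i _ => (tendsto_const_nhds (x := (1:ℝ))).sub (tendsto_pfn_atTop (d i)))
  simp at this; exact this

lemma Fd_sub_diff (d : Deck n) (j : Fin n) (t : ℝ) :
    Fd (d.sub j) t - Fd d t =
      (pfn (d j) t - pfn (d j - 1) t) * ∏ i ∈ Finset.univ.erase j, (1 - pfn (d i) t) := by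
  have h1 : Fd d t = (1 - pfn (d j) t) * ∏ i ∈ Finset.univ.erase j, (1 - pfn (d i) t) :=
    (Finset.mul_prod_erase _ _ (Finset.mem_univ j)).symm
  have h2 : Fd (d.sub j) t
      = (1 - pfn (d j - 1) t) * ∏ i ∈ Finset.univ.erase j, (1 - pfn (d i) t) := by
    rw [Fd, ← Finset.mul_prod_erase _ _ (Finset.mem_univ j)]
    have : d.sub j j = d j - 1 := by simp [Deck.sub]
    rw [this]
    congr 1
    refine Finset.prod_congr rfl fun i hi => ?_
    have : d.sub j i = d i := by
      simp only [Deck.sub, if_neg (Finset.ne_of_mem_erase hi)]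
    rw [this]
  rw [h1, h2]; ring

lemma hasDerivAt_Fd (d : Deck n) (t : ℝ) :
    HasDerivAt (Fd d) (∑ j, (Fd (d.sub j) t - Fd d t)) t := by
  have h := HasDerivAt.fun_finset_prod (u := (Finset.univ : Finset (Fin n)))
    (f := fun i s => 1 - pfn (d i) s)
    (f' := fun i => pfn (d i) t - pfn (d i - 1) t)
    (fun i _ => by simpa using ((hasDerivAt_pfn (d i) t).const_sub 1))
  refine h.congr_deriv ?_
  refine Finset.sum_congr rfl fun j _ => ?_
  rw [Fd_sub_diff]
  simp [smul_eq_mul]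
  ring

lemma one_sub_prod_le_sum {ι : Type*} (s : Finset ι) (x : ι → ℝ)
    (h0 : ∀ i ∈ s, 0 ≤ x i) (h1 : ∀ i ∈ s, x i ≤ 1) :
    1 - ∏ i ∈ s, (1 - x i) ≤ ∑ i ∈ s, x i := by
  classical
  induction s using Finset.cons_induction with
  | empty => simp
  | cons a s ha ih =>
    rw [Finset.prod_cons, Finset.sum_cons]
    have h0a := h0 a (Finset.mem_cons_self a s)
    have h1a := h1 a (Finset.mem_cons_self a s)
    have ihs := ih (fun i hi => h0 i (Finset.mem_cons_of_mem hi))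
      (fun i hi => h1 i (Finset.mem_cons_of_mem hi))
    have hfac : ∀ i ∈ s, (0:ℝ) ≤ 1 - x i := fun i hi => by
      linarith [h1 i (Finset.mem_cons_of_mem hi)]
    have hprod_le : ∏ i ∈ s, (1 - x i) ≤ 1 :=
      Finset.prod_le_one hfac (fun i hi => by linarith [h0 i (Finset.mem_cons_of_mem hi)])
    have hprod_nonneg : (0:ℝ) ≤ ∏ i ∈ s, (1 - x i) := Finset.prod_nonneg hfac
    nlinarith

lemma integrableOn_one_sub_Fd (d : Deck n) :
    IntegrableOn (fun t => 1 - Fd d t) (Ioi (0:ℝ)) := by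
  apply Integrable.mono' (integrable_finset_sum (μ := volume.restrict (Ioi 0))
    (Finset.univ : Finset (Fin n)) (fun i _ => integrableOn_pfn (d i)))
  · exact ((continuous_const.sub (continuous_Fd d)).aestronglyMeasurable).restrict
  · filter_upwards [ae_restrict_mem measurableSet_Ioi] with t ht
    have ht' : (0:ℝ) ≤ t := le_of_lt ht
    rw [Real.norm_eq_abs, abs_of_nonneg (by linarith [Fd_le_one (d := d) ht'])]
    exact one_sub_prod_le_sum _ _ (fun i _ => pfn_nonneg ht')
      (fun i _ => pfn_le_one ht')

lemma integrableOn_Fd_diff (d : Deck n) (j : Fin n) :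
    IntegrableOn (fun t => Fd (d.sub j) t - Fd d t) (Ioi (0:ℝ)) := by
  have := (integrableOn_one_sub_Fd d).sub (integrableOn_one_sub_Fd (d.sub j))
  exact this.congr (Filter.Eventually.of_forall fun t => by simp)

lemma V_diff_eq (d : Deck n) (j : Fin n) :
    Vd d - Vd (d.sub j) = ∫ t in Ioi (0:ℝ), (Fd (d.sub j) t - Fd d t) := by
  rw [Vd, Vd, ← integral_sub (integrableOn_one_sub_Fd d) (integrableOn_one_sub_Fd (d.sub j))]
  exact integral_congr_ae (Filter.Eventually.of_forall fun t => by ring)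

lemma V_sub_le (d : Deck n) (j : Fin n) : Vd (d.sub j) ≤ Vd d := by
  rw [← sub_nonneg, V_diff_eq]
  apply setIntegral_nonneg measurableSet_Ioi
  intro t ht
  rw [Fd_sub_diff]
  apply mul_nonneg
  · have : d j - 1 ≤ d j := Nat.sub_le _ _
    linarith [pfn_mono this (le_of_lt ht)]
  · exact Finset.prod_nonneg fun i _ => by linarith [pfn_le_one (c := d i) (le_of_lt ht)]

lemma Vd_nonneg (d : Deck n) : 0 ≤ Vd d :=
  setIntegral_nonneg measurableSet_Ioi fun t ht => by linarith [Fd_le_one (d := d) (le_of_lt ht)]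

lemma Deck.sub_eq_self {d : Deck n} {j : Fin n} (h : d j = 0) : d.sub j = d := by
  funext i
  simp only [Deck.sub]
  split
  · next heq => subst heq; omega
  · rfl

lemma Vd_of_zero : Vd (0 : Deck n) = 0 := by
  have h : ∀ t : ℝ, Fd (0 : Deck n) t = 1 := fun t => by simp [Fd, pfn_zero]
  simp [Vd, h]

lemma sum_V_diff (d : Deck n) (hd : d ≠ 0) : ∑ j, (Vd d - Vd (d.sub j)) = 1 := by
  have hJ : ∀ j : Fin n, IntegrableOn (fun t => Fd (d.sub j) t - Fd d t) (Ioi (0:ℝ)) :=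
    integrableOn_Fd_diff d
  have hsum : ∑ j, (Vd d - Vd (d.sub j))
      = ∫ t in Ioi (0:ℝ), ∑ j, (Fd (d.sub j) t - Fd d t) := by
    rw [integral_finset_sum _ (fun j _ => hJ j)]
    exact Finset.sum_congr rfl fun j _ => V_diff_eq d j
  rw [hsum]
  have := integral_Ioi_of_hasDerivAt_of_tendsto (a := (0:ℝ)) (f := Fd d)
    (f' := fun t => ∑ j, (Fd (d.sub j) t - Fd d t)) (m := 1)
    ((continuous_Fd d).continuousWithinAt)
    (fun t _ => hasDerivAt_Fd d t)
    (integrable_finset_sum _ (fun j _ => hJ j))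
    (tendsto_Fd_atTop d)
  rw [this, Fd_at_zero hd, sub_zero]

lemma sum_V_diff_supp (d : Deck n) (hd : d ≠ 0) :
    ∑ j ∈ Finset.univ.filter (fun j => d j ≠ 0), (Vd d - Vd (d.sub j)) = 1 := by
  rw [← sum_V_diff d hd]
  apply Finset.sum_subset (Finset.filter_subset _ Finset.univ)
  intro j _ hj
  simp only [Finset.mem_filter, Finset.mem_univ, true_and, not_not] at hj
  rw [Deck.sub_eq_self hj, sub_self]

lemma deck_sum_sub {d : Deck n} {j : Fin n} (hj : d j ≠ 0) :
    ∑ i, (d.sub j) i = (∑ i, d i) - 1 := by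
  rw [← Finset.add_sum_erase _ _ (Finset.mem_univ j),
    ← Finset.add_sum_erase _ d (Finset.mem_univ j)]
  have h1 : d.sub j j = d j - 1 := by simp [Deck.sub]
  have h2 : ∑ i ∈ Finset.univ.erase j, d.sub j i = ∑ i ∈ Finset.univ.erase j, d i :=
    Finset.sum_congr rfl (fun i hi => by simp [Deck.sub, Finset.ne_of_mem_erase hi])
  rw [h1, h2]
  omega

lemma deck_eq_zero_of_sum {d : Deck n} (h : ∑ i, d i = 0) : d = 0 := by
  funext i
  exact (Finset.sum_eq_zero_iff.1 h) i (Finset.mem_univ i)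

lemma supp_nonempty {d : Deck n} (hd : d ≠ 0) :
    (Finset.univ.filter fun j => d j ≠ 0).Nonempty := by
  obtain ⟨i, hi⟩ := Function.ne_iff.1 hd
  exact ⟨i, Finset.mem_filter.2 ⟨Finset.mem_univ i, by simpa using hi⟩⟩

lemma greedy_isDist {d : Deck n} (hd : d ≠ 0) : IsDist (greedy d) := by
  have hk : (0:ℝ) < ((Finset.univ.filter fun j => d j ≠ 0).card : ℝ) := by
    exact_mod_cast Finset.card_pos.2 (supp_nonempty hd)
  constructor
  · intro i
    simp only [greedy]
    split
    · positivity
    · exact le_rfl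
  · rw [← Finset.sum_filter_add_sum_filter_not Finset.univ (fun j => d j ≠ 0)]
    have h1 : ∑ i ∈ Finset.univ.filter (fun j => d j ≠ 0), greedy d i
        = ∑ i ∈ Finset.univ.filter (fun j => d j ≠ 0),
            ((Finset.univ.filter fun j => d j ≠ 0).card : ℝ)⁻¹ := by
      refine Finset.sum_congr rfl fun i hi => ?_
      simp only [Finset.mem_filter] at hi
      simp [greedy, hi.2]
    have h2 : ∑ i ∈ Finset.univ.filter (fun j => ¬ d j ≠ 0), greedy d i = 0 := by
      refine Finset.sum_eq_zero fun i hi => ?_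
      simp only [Finset.mem_filter, not_not] at hi
      simp [greedy, hi.2]
    rw [h1, h2, Finset.sum_const, add_zero, nsmul_eq_mul, mul_inv_cancel₀ (ne_of_gt hk)]

lemma greedy_isShuffler : IsShuffler (greedy (n := n)) := by
  intro d hd
  refine ⟨greedy_isDist hd, fun i hi => ?_⟩
  by_contra h
  simp [greedy, h] at hi

lemma greedy_isGuesser : IsGuesser (greedy (n := n)) := fun d hd => greedy_isDist hd

lemma scoreAux_succ (G S : Strat n) (N : ℕ) (d : Deck n) :
    scoreAux G S (N + 1) d = ∑ j ∈ Finset.univ.filter (fun j => d j ≠ 0),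
      S d j * (G d j + scoreAux G S N (d.sub j)) := rfl

lemma Vd_child_sum {d : Deck n} (hd : d ≠ 0) :
    ∑ j ∈ Finset.univ.filter (fun j => d j ≠ 0), Vd (d.sub j)
      = ((Finset.univ.filter (fun j => d j ≠ 0)).card : ℝ) * Vd d - 1 := by
  have h := sum_V_diff_supp d hd
  rw [Finset.sum_sub_distrib, Finset.sum_const, nsmul_eq_mul] at h
  linarith

lemma scoreAux_le_Vd {G : Strat n} (hG : IsGuesser G) :
    ∀ N (d : Deck n), ∑ i, d i = N → scoreAux G greedy N d ≤ Vd d := by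
  intro N
  induction N with
  | zero => intro d _; simpa [scoreAux] using Vd_nonneg d
  | succ N ih =>
    intro d hsum
    have hd : d ≠ 0 := by
      intro h; rw [h] at hsum; simp at hsum
    have hkpos : (0:ℝ) < ((Finset.univ.filter (fun j => d j ≠ 0)).card : ℝ) := by
      exact_mod_cast Finset.card_pos.2 (supp_nonempty hd)
    set k : ℝ := ((Finset.univ.filter (fun j => d j ≠ 0)).card : ℝ) with hkdef
    have hgre : ∀ j ∈ Finset.univ.filter (fun j => d j ≠ 0), greedy d j = k⁻¹ := by
      intro j hj
      have := (Finset.mem_filter.1 hj).2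
      simp [greedy, this, hkdef]
    have hGsum : ∑ j ∈ Finset.univ.filter (fun j => d j ≠ 0), G d j ≤ 1 := by
      rw [← (hG d hd).2]
      exact Finset.sum_le_sum_of_subset_of_nonneg (Finset.filter_subset _ _)
        (fun i _ _ => (hG d hd).1 i)
    have hGnn : ∀ j, 0 ≤ G d j := (hG d hd).1
    rw [scoreAux_succ]
    calc ∑ j ∈ Finset.univ.filter (fun j => d j ≠ 0),
          greedy d j * (G d j + scoreAux G greedy N (d.sub j))
        ≤ ∑ j ∈ Finset.univ.filter (fun j => d j ≠ 0), k⁻¹ * (G d j + Vd (d.sub j)) := by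
          refine Finset.sum_le_sum fun j hj => ?_
          rw [hgre j hj]
          have hjne := (Finset.mem_filter.1 hj).2
          have hsub : ∑ i, (d.sub j) i = N := by
            rw [deck_sum_sub hjne, hsum]; omega
          exact mul_le_mul_of_nonneg_left
            (add_le_add_right (ih (d.sub j) hsub) _) (inv_nonneg.2 (le_of_lt hkpos))
      _ = k⁻¹ * ((∑ j ∈ Finset.univ.filter (fun j => d j ≠ 0), G d j)
            + ∑ j ∈ Finset.univ.filter (fun j => d j ≠ 0), Vd (d.sub j)) := by
          rw [← Finset.mul_sum, Finset.sum_add_distrib]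
      _ ≤ k⁻¹ * (1 + (k * Vd d - 1)) := by
          rw [Vd_child_sum hd]
          exact mul_le_mul_of_nonneg_left (by linarith) (inv_nonneg.2 (le_of_lt hkpos))
      _ = Vd d := by field_simp; ring

lemma scoreAux_greedy_eq_Vd :
    ∀ N (d : Deck n), ∑ i, d i = N → scoreAux (greedy (n := n)) greedy N d = Vd d := by
  intro N
  induction N with
  | zero =>
    intro d hsum
    have : d = 0 := deck_eq_zero_of_sum hsum
    rw [this, Vd_of_zero]; rfl
  | succ N ih =>
    intro d hsum
    have hd : d ≠ 0 := by
      intro h; rw [h] at hsum; simp at hsum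
    have hkpos : (0:ℝ) < ((Finset.univ.filter (fun j => d j ≠ 0)).card : ℝ) := by
      exact_mod_cast Finset.card_pos.2 (supp_nonempty hd)
    set k : ℝ := ((Finset.univ.filter (fun j => d j ≠ 0)).card : ℝ) with hkdef
    have hgre : ∀ j ∈ Finset.univ.filter (fun j => d j ≠ 0), greedy d j = k⁻¹ := by
      intro j hj
      have := (Finset.mem_filter.1 hj).2
      simp [greedy, this, hkdef]
    rw [scoreAux_succ]
    have hterm : ∀ j ∈ Finset.univ.filter (fun j => d j ≠ 0),
        greedy d j * (greedy d j + scoreAux (greedy (n := n)) greedy N (d.sub j))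
          = k⁻¹ * (k⁻¹ + Vd (d.sub j)) := by
      intro j hj
      have hjne := (Finset.mem_filter.1 hj).2
      have hsub : ∑ i, (d.sub j) i = N := by rw [deck_sum_sub hjne, hsum]; omega
      rw [hgre j hj, ih (d.sub j) hsub]
    rw [Finset.sum_congr rfl hterm, ← Finset.mul_sum, Finset.sum_add_distrib,
      Finset.sum_const, Vd_child_sum hd, nsmul_eq_mul]
    field_simp
    rw [← hkdef]; ring

lemma scoreAux_le_fuel {G S : Strat n} (hG : IsGuesser G) (hS : IsShuffler S) :
    ∀ N (d : Deck n), scoreAux G S N d ≤ N := by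
  intro N
  induction N with
  | zero => intro d; simp [scoreAux]
  | succ N ih =>
    intro d
    by_cases hd : d = 0
    · subst hd
      rw [scoreAux_succ]
      have : (Finset.univ.filter fun j => (0 : Deck n) j ≠ 0) = ∅ := by
        apply Finset.filter_false_of_mem; intro i _; simp
      rw [this, Finset.sum_empty]
      positivity
    · have hSd := (hS d hd).1
      have hSsupp := (hS d hd).2
      have hGd := hG d hd
      rw [scoreAux_succ]
      have hSfil : ∑ j ∈ Finset.univ.filter (fun j => d j ≠ 0), S d j = 1 := by
        rw [← hSd.2]
        apply Finset.sum_subset (Finset.filter_subset _ _)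
        intro j _ hj
        simp only [Finset.mem_filter, Finset.mem_univ, true_and, not_not] at hj
        by_contra h
        exact (hSsupp j h) hj
      calc ∑ j ∈ Finset.univ.filter (fun j => d j ≠ 0),
            S d j * (G d j + scoreAux G S N (d.sub j))
          ≤ ∑ j ∈ Finset.univ.filter (fun j => d j ≠ 0), S d j * (1 + N) := by
            refine Finset.sum_le_sum fun j hj => ?_
            apply mul_le_mul_of_nonneg_left _ (hSd.1 j)
            have hG1 : G d j ≤ 1 := by
              rw [← hGd.2]
              exact Finset.single_le_sum (fun i _ => hGd.1 i) (Finset.mem_univ j)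
            linarith [ih (d.sub j)]
        _ = 1 + N := by rw [← Finset.sum_mul, hSfil, one_mul]
        _ ≤ (N + 1 : ℕ) := by push_cast; linarith

noncomputable def bestG (S : Strat n) : Strat n := fun d =>
  if h : (Finset.univ.filter fun j => d j ≠ 0).Nonempty then
    fun i => if i = Classical.choose (Finset.exists_max_image _ (S d) h) then 1 else 0
  else fun _ => 0

lemma bestG_isGuesser (S : Strat n) : IsGuesser (bestG S) := by
  intro d hd
  have h : (Finset.univ.filter fun j => d j ≠ 0).Nonempty := supp_nonempty hd
  constructor
  · intro i
    simp only [bestG, dif_pos h]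
    split <;> norm_num
  · simp only [bestG, dif_pos h]
    rw [Finset.sum_ite_eq' Finset.univ]
    simp

lemma Vd_le_scoreAux_bestG {S : Strat n} (hS : IsShuffler S) :
    ∀ N (d : Deck n), ∑ i, d i = N → Vd d ≤ scoreAux (bestG S) S N d := by
  intro N
  induction N with
  | zero =>
    intro d hsum
    rw [deck_eq_zero_of_sum hsum, Vd_of_zero]
    simp [scoreAux]
  | succ N ih =>
    intro d hsum
    have hd : d ≠ 0 := by
      intro h; rw [h] at hsum; simp at hsum
    have h : (Finset.univ.filter fun j => d j ≠ 0).Nonempty := supp_nonempty hd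
    set jm := Classical.choose (Finset.exists_max_image _ (S d) h) with hjm
    obtain ⟨hjmem, hjmax⟩ := Classical.choose_spec (Finset.exists_max_image _ (S d) h)
    have hSd := (hS d hd).1
    have hSsupp := (hS d hd).2
    have hSfil : ∑ j ∈ Finset.univ.filter (fun j => d j ≠ 0), S d j = 1 := by
      rw [← hSd.2]
      apply Finset.sum_subset (Finset.filter_subset _ _)
      intro j _ hj
      simp only [Finset.mem_filter, Finset.mem_univ, true_and, not_not] at hj
      by_contra hcon
      exact (hSsupp j hcon) hj
    have hbg : ∀ i, bestG S d i = if i = jm then 1 else 0 := by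
      intro i; simp only [bestG, dif_pos h, hjm]
    rw [scoreAux_succ]
    have step1 : ∑ j ∈ Finset.univ.filter (fun j => d j ≠ 0),
          S d j * (bestG S d j + Vd (d.sub j))
        ≤ ∑ j ∈ Finset.univ.filter (fun j => d j ≠ 0),
          S d j * (bestG S d j + scoreAux (bestG S) S N (d.sub j)) := by
      refine Finset.sum_le_sum fun j hj => ?_
      have hjne := (Finset.mem_filter.1 hj).2
      have hsub : ∑ i, (d.sub j) i = N := by rw [deck_sum_sub hjne, hsum]; omega
      exact mul_le_mul_of_nonneg_left (add_le_add_right (ih (d.sub j) hsub) _) (hSd.1 j)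
    refine le_trans ?_ step1
    -- ∑ S_j bestG_j = S jm
    have hSbg : ∑ j ∈ Finset.univ.filter (fun j => d j ≠ 0), S d j * bestG S d j = S d jm := by
      rw [Finset.sum_congr rfl (fun j _ => by rw [hbg j])]
      rw [Finset.sum_congr rfl (fun j _ => (mul_ite _ _ _ _ : S d j * _ = _))]
      simp only [mul_one, mul_zero]
      rw [Finset.sum_ite_eq' _ jm (fun j => S d j)]
      have hjm' : jm ∈ Finset.univ.filter (fun j => d j ≠ 0) := hjmem
      simp [hjm']
    -- ∑ S_j W_j ≤ S jm
    have hW : ∑ j ∈ Finset.univ.filter (fun j => d j ≠ 0), S d j * (Vd d - Vd (d.sub j))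
        ≤ S d jm := by
      calc ∑ j ∈ Finset.univ.filter (fun j => d j ≠ 0), S d j * (Vd d - Vd (d.sub j))
          ≤ ∑ j ∈ Finset.univ.filter (fun j => d j ≠ 0), S d jm * (Vd d - Vd (d.sub j)) := by
            refine Finset.sum_le_sum fun j hj => ?_
            exact mul_le_mul_of_nonneg_right (hjmax j hj) (by linarith [V_sub_le d j])
        _ = S d jm := by
            rw [← Finset.mul_sum, sum_V_diff_supp d hd, mul_one]
    have expand : ∑ j ∈ Finset.univ.filter (fun j => d j ≠ 0),
        S d j * (bestG S d j + Vd (d.sub j))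
        = S d jm + Vd d - ∑ j ∈ Finset.univ.filter (fun j => d j ≠ 0),
            S d j * (Vd d - Vd (d.sub j)) := by
      have : ∀ j, S d j * (bestG S d j + Vd (d.sub j))
          = S d j * bestG S d j + S d j * Vd d - S d j * (Vd d - Vd (d.sub j)) := by
        intro j; ring
      rw [Finset.sum_congr rfl (fun j _ => this j), Finset.sum_sub_distrib,
        Finset.sum_add_distrib, hSbg, ← Finset.sum_mul, hSfil, one_mul]
    linarith [hW, expand.ge, expand.le]

lemma fval_greedy_eq_Vd (d : Deck n) : fval greedy d = Vd d := by
  have hmem : Vd d ∈ {x | ∃ G, IsGuesser G ∧ score G greedy d = x} :=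
    ⟨greedy, greedy_isGuesser, scoreAux_greedy_eq_Vd _ d rfl⟩
  have hub : ∀ x ∈ {x | ∃ G, IsGuesser G ∧ score G greedy d = x}, x ≤ Vd d := by
    rintro x ⟨G, hG, rfl⟩
    exact scoreAux_le_Vd hG _ d rfl
  exact le_antisymm (csSup_le ⟨Vd d, hmem⟩ hub) (le_csSup ⟨Vd d, hub⟩ hmem)

lemma fval_ge_Vd {S : Strat n} (hS : IsShuffler S) (d : Deck n) : Vd d ≤ fval S d := by
  have hmem : score (bestG S) S d ∈ {x | ∃ G, IsGuesser G ∧ score G S d = x} :=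
    ⟨bestG S, bestG_isGuesser S, rfl⟩
  have hbdd : BddAbove {x | ∃ G, IsGuesser G ∧ score G S d = x} := by
    refine ⟨((∑ i, d i : ℕ) : ℝ), ?_⟩
    rintro x ⟨G, hG, rfl⟩
    exact scoreAux_le_fuel hG hS _ d
  exact le_trans (Vd_le_scoreAux_bestG hS _ d rfl) (le_csSup hbdd hmem)

lemma fopt_eq_fval_greedy (d : Deck n) : fopt d = fval greedy d := by
  have hmem : fval greedy d ∈ {x | ∃ S, IsShuffler S ∧ fval S d = x} :=
    ⟨greedy, greedy_isShuffler, rfl⟩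
  have hlb : ∀ x ∈ {x | ∃ S, IsShuffler S ∧ fval S d = x}, fval greedy d ≤ x := by
    rintro x ⟨S, hS, rfl⟩
    rw [fval_greedy_eq_Vd]
    exact fval_ge_Vd hS d
  exact le_antisymm (csInf_le ⟨fval greedy d, hlb⟩ hmem) (le_csInf ⟨_, hmem⟩ hlb)

lemma pfn_one (t : ℝ) : pfn 1 t = Real.exp (-t) := by simp [pfn]

lemma Fd_const (m n : ℕ) (t : ℝ) : Fd (fun _ : Fin n => m) t = (1 - pfn m t) ^ n := by
  simp [Fd, Finset.prod_const]

lemma Vd_const (m n : ℕ) :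
    Vd (fun _ : Fin n => m) = ∫ t in Ioi (0:ℝ), (1 - (1 - pfn m t) ^ n) := by
  unfold Vd
  exact integral_congr_ae (Filter.Eventually.of_forall fun t => by simp only []; rw [Fd_const])

lemma integrableOn_VI (m n : ℕ) :
    IntegrableOn (fun t => 1 - (1 - pfn m t) ^ n) (Ioi (0:ℝ)) := by
  have := integrableOn_one_sub_Fd (fun _ : Fin n => m)
  exact this.congr (Filter.Eventually.of_forall fun t => by simp only []; rw [Fd_const])

lemma integral_pfn_tail_le (c : ℕ) {T : ℝ} (hT : 0 < T) :
    ∫ t in Ioi T, pfn c t ≤ c * pfn c T := by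
  have htel : ∀ t : ℝ, pfn c t = ∑ j ∈ Finset.range c, (pfn (j + 1) t - pfn j t) := by
    intro t
    rw [Finset.sum_range_sub (fun j => pfn j t) c, pfn_zero, sub_zero]
  have hj : ∀ j : ℕ, (∫ t in Ioi T, (pfn (j + 1) t - pfn j t)) = pfn (j + 1) T
      ∧ IntegrableOn (fun t => pfn (j + 1) t - pfn j t) (Ioi T) := by
    intro j
    have hderiv : ∀ t ∈ Ioi T, HasDerivAt (fun s => -pfn (j + 1) s)
        (pfn (j + 1) t - pfn j t) t := by
      intro t _
      have := (hasDerivAt_pfn (j + 1) t).neg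
      have heq : -(pfn (j + 1 - 1) t - pfn (j + 1) t) = pfn (j + 1) t - pfn j t := by
        simp only [Nat.add_sub_cancel]; ring
      rw [heq] at this
      exact this
    have hpos : ∀ t ∈ Ioi T, 0 ≤ pfn (j + 1) t - pfn j t := by
      intro t ht
      have : (0:ℝ) ≤ t := le_of_lt (lt_trans hT ht)
      linarith [pfn_mono (Nat.le_succ j) this]
    have htend : Filter.Tendsto (fun s => -pfn (j + 1) s) Filter.atTop (nhds 0) := by
      simpa using (tendsto_pfn_atTop (j + 1)).neg
    have hcont : ContinuousWithinAt (fun s => -pfn (j + 1) s) (Ici T) T :=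
      ((continuous_pfn (j + 1)).neg).continuousWithinAt
    constructor
    · have := integral_Ioi_of_hasDerivAt_of_nonneg hcont hderiv hpos htend
      rw [this]; ring
    · exact integrableOn_Ioi_deriv_of_nonneg hcont hderiv hpos htend
  calc ∫ t in Ioi T, pfn c t
      = ∫ t in Ioi T, ∑ j ∈ Finset.range c, (pfn (j + 1) t - pfn j t) :=
        integral_congr_ae (Filter.Eventually.of_forall fun t => htel t)
    _ = ∑ j ∈ Finset.range c, ∫ t in Ioi T, (pfn (j + 1) t - pfn j t) :=
        integral_finset_sum _ (fun j _ => (hj j).2)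
    _ = ∑ j ∈ Finset.range c, pfn (j + 1) T :=
        Finset.sum_congr rfl (fun j _ => (hj j).1)
    _ ≤ ∑ j ∈ Finset.range c, pfn c T :=
        Finset.sum_le_sum (fun j hj' => pfn_mono (Finset.mem_range.1 hj') (le_of_lt hT))
    _ = c * pfn c T := by rw [Finset.sum_const, Finset.card_range, nsmul_eq_mul]

lemma pfn_poly_bound (c : ℕ) {T : ℝ} (hT : 0 ≤ T) :
    pfn c T ≤ c * (1 + T) ^ (c - 1) * Real.exp (-T) := by
  have hterm : ∀ j ∈ Finset.range c, T ^ j / (j.factorial : ℝ) ≤ (1 + T) ^ (c - 1) := by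
    intro j hj
    have hj' : j ≤ c - 1 := by have := Finset.mem_range.1 hj; omega
    calc T ^ j / (j.factorial : ℝ) ≤ T ^ j / 1 := by
          apply div_le_div_of_nonneg_left (pow_nonneg hT j) zero_lt_one
          exact_mod_cast j.factorial_pos
      _ = T ^ j := by rw [div_one]
      _ ≤ (1 + T) ^ j := pow_le_pow_left₀ hT (by linarith) j
      _ ≤ (1 + T) ^ (c - 1) := pow_le_pow_right₀ (by linarith) hj'
  calc pfn c T ≤ Real.exp (-T) * ∑ j ∈ Finset.range c, (1 + T) ^ (c - 1) :=
        mul_le_mul_of_nonneg_left (Finset.sum_le_sum hterm) (Real.exp_nonneg _)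
    _ = c * (1 + T) ^ (c - 1) * Real.exp (-T) := by
        rw [Finset.sum_const, Finset.card_range, nsmul_eq_mul]; ring

lemma Vd_const_upper (m n : ℕ) {T : ℝ} (hT : 0 < T) :
    Vd (fun _ : Fin n => m)
      ≤ T + n * (m * (m * (1 + T) ^ (m - 1) * Real.exp (-T))) := by
  rw [Vd_const]
  have hIoi : Set.Ioc (0:ℝ) T ∪ Set.Ioi T = Set.Ioi 0 := Set.Ioc_union_Ioi_eq_Ioi (le_of_lt hT)
  have hint := integrableOn_VI m n
  have hint1 : IntegrableOn (fun t => 1 - (1 - pfn m t) ^ n) (Ioc (0:ℝ) T) :=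
    hint.mono_set (fun t ht => ht.1)
  have hint2 : IntegrableOn (fun t => 1 - (1 - pfn m t) ^ n) (Ioi T) :=
    hint.mono_set (Ioi_subset_Ioi (le_of_lt hT))
  have hsplit : ∫ t in Ioi (0:ℝ), (1 - (1 - pfn m t) ^ n)
      = (∫ t in Ioc (0:ℝ) T, (1 - (1 - pfn m t) ^ n))
        + ∫ t in Ioi T, (1 - (1 - pfn m t) ^ n) := by
    rw [← hIoi, setIntegral_union (Ioc_disjoint_Ioi le_rfl) measurableSet_Ioi hint1 hint2]
  rw [hsplit]
  have h1 : (∫ t in Ioc (0:ℝ) T, (1 - (1 - pfn m t) ^ n)) ≤ T := by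
    have : (∫ t in Ioc (0:ℝ) T, (1 - (1 - pfn m t) ^ n))
        ≤ ∫ _ in Ioc (0:ℝ) T, (1:ℝ) := by
      apply setIntegral_mono_on hint1 (integrableOn_const measure_Ioc_lt_top.ne)
        measurableSet_Ioc
      intro t ht
      have ht' : (0:ℝ) ≤ t := le_of_lt ht.1
      have := pfn_le_one (c := m) ht'
      have := pfn_nonneg (c := m) ht'
      nlinarith [pow_nonneg (by linarith : (0:ℝ) ≤ 1 - pfn m t) n]
    calc (∫ t in Ioc (0:ℝ) T, (1 - (1 - pfn m t) ^ n)) ≤ ∫ _ in Ioc (0:ℝ) T, (1:ℝ) := this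
      _ = T := by simp [Real.volume_Ioc, ENNReal.toReal_ofReal (le_of_lt hT), hT.le]
  have h2 : (∫ t in Ioi T, (1 - (1 - pfn m t) ^ n))
      ≤ n * (m * (m * (1 + T) ^ (m - 1) * Real.exp (-T))) := by
    have hmono : (∫ t in Ioi T, (1 - (1 - pfn m t) ^ n))
        ≤ ∫ t in Ioi T, (n : ℝ) * pfn m t := by
      apply setIntegral_mono_on hint2
        (((integrableOn_pfn m).mono_set (Ioi_subset_Ioi (le_of_lt hT))).const_mul _)
        measurableSet_Ioi
      intro t ht
      have ht' : (0:ℝ) ≤ t := le_of_lt (lt_trans hT ht)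
      have hb := one_add_mul_le_pow (a := -pfn m t)
        (by nlinarith [pfn_le_one (c := m) ht', pfn_nonneg (c := m) ht']) n
      have : (1 : ℝ) + n * (-pfn m t) ≤ (1 - pfn m t) ^ n := by
        simpa [sub_eq_add_neg] using hb
      linarith
    calc (∫ t in Ioi T, (1 - (1 - pfn m t) ^ n)) ≤ ∫ t in Ioi T, (n : ℝ) * pfn m t := hmono
      _ = n * ∫ t in Ioi T, pfn m t := by
          rw [integral_const_mul]
      _ ≤ n * (m * pfn m T) := by
          apply mul_le_mul_of_nonneg_left _ (Nat.cast_nonneg n)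
          have := integral_pfn_tail_le m hT
          linarith
      _ ≤ n * (m * (m * (1 + T) ^ (m - 1) * Real.exp (-T))) := by
          apply mul_le_mul_of_nonneg_left _ (Nat.cast_nonneg n)
          exact mul_le_mul_of_nonneg_left (pfn_poly_bound m (le_of_lt hT)) (Nat.cast_nonneg m)
  linarith

lemma Vd_const_lower (m n : ℕ) (hm : 0 < m) {T : ℝ} (hT : 0 < T) :
    T * (1 - Real.exp (-(n * Real.exp (-T)))) ≤ Vd (fun _ : Fin n => m) := by
  rw [Vd_const]
  have hint := integrableOn_VI m n
  have hint1 : IntegrableOn (fun t => 1 - (1 - pfn m t) ^ n) (Ioc (0:ℝ) T) :=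
    hint.mono_set (fun t ht => ht.1)
  have hmain : (∫ t in Ioc (0:ℝ) T, (1 - Real.exp (-(n * Real.exp (-T)))))
      ≤ ∫ t in Ioc (0:ℝ) T, (1 - (1 - pfn m t) ^ n) := by
    apply setIntegral_mono_on (integrableOn_const measure_Ioc_lt_top.ne) hint1
      measurableSet_Ioc
    intro t ht
    have ht0 : (0:ℝ) ≤ t := le_of_lt ht.1
    have hq1 : Real.exp (-t) ≤ pfn m t := by
      rw [← pfn_one]
      exact pfn_mono hm ht0
    have hq2 : 1 - pfn m t ≤ 1 - Real.exp (-T) := by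
      have : Real.exp (-T) ≤ Real.exp (-t) := Real.exp_le_exp.2 (by linarith [ht.2])
      linarith
    have hq0 : 0 ≤ 1 - pfn m t := by linarith [pfn_le_one (c := m) ht0]
    have hstep : (1 - pfn m t) ^ n ≤ (1 - Real.exp (-T)) ^ n := pow_le_pow_left₀ hq0 hq2 n
    have hexp : (1 - Real.exp (-T)) ^ n ≤ Real.exp (-(n * Real.exp (-T))) := by
      have h1 : 1 - Real.exp (-T) ≤ Real.exp (-Real.exp (-T)) := by
        linarith [Real.add_one_le_exp (-Real.exp (-T))]
      have h0 : (0:ℝ) ≤ 1 - Real.exp (-T) := by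
        have : Real.exp (-T) ≤ Real.exp 0 := Real.exp_le_exp.2 (by linarith)
        rw [Real.exp_zero] at this
        linarith
      calc (1 - Real.exp (-T)) ^ n ≤ Real.exp (-Real.exp (-T)) ^ n := pow_le_pow_left₀ h0 h1 n
        _ = Real.exp (-(n * Real.exp (-T))) := by
            rw [← Real.exp_nat_mul]
            ring_nf
    linarith
  have hconst : (∫ _ in Ioc (0:ℝ) T, (1 - Real.exp (-(n * Real.exp (-T)))))
      = T * (1 - Real.exp (-(n * Real.exp (-T)))) := by
    rw [setIntegral_const]
    simp [Real.volume_Ioc, ENNReal.toReal_ofReal (le_of_lt hT), smul_eq_mul, hT.le]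
  have htail : 0 ≤ ∫ t in Ioi T, (1 - (1 - pfn m t) ^ n) := by
    apply setIntegral_nonneg measurableSet_Ioi
    intro t ht
    have ht' : (0:ℝ) ≤ t := le_of_lt (lt_trans hT ht)
    have h0 : (0:ℝ) ≤ 1 - pfn m t := by linarith [pfn_le_one (c := m) ht']
    have h1 : 1 - pfn m t ≤ 1 := by linarith [pfn_nonneg (c := m) ht']
    have := pow_le_one₀ h0 h1 (n := n)
    linarith
  have hIoi : Set.Ioc (0:ℝ) T ∪ Set.Ioi T = Set.Ioi 0 := Set.Ioc_union_Ioi_eq_Ioi (le_of_lt hT)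
  have hint2 : IntegrableOn (fun t => 1 - (1 - pfn m t) ^ n) (Ioi T) :=
    hint.mono_set (Ioi_subset_Ioi (le_of_lt hT))
  have hsplit : ∫ t in Ioi (0:ℝ), (1 - (1 - pfn m t) ^ n)
      = (∫ t in Ioc (0:ℝ) T, (1 - (1 - pfn m t) ^ n))
        + ∫ t in Ioi T, (1 - (1 - pfn m t) ^ n) := by
    rw [← hIoi, setIntegral_union (Ioc_disjoint_Ioi le_rfl) measurableSet_Ioi hint1 hint2]
  rw [hsplit]
  rw [hconst] at hmain
  linarith

lemma tendsto_pow_log_div_rpow_my (k : ℕ) {ε : ℝ} (hε : 0 < ε) :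
    Filter.Tendsto (fun x : ℝ => (Real.log x) ^ k / x ^ ε) Filter.atTop (nhds 0) := by
  have h := (isLittleO_log_rpow_rpow_atTop (k : ℝ) hε).tendsto_div_nhds_zero
  apply h.congr
  intro x
  rw [Real.rpow_natCast]

lemma V_const_asymp (m : ℕ) (hm : 0 < m) :
    (fun n : ℕ => Vd (fun _ : Fin n => m) - Real.log n)
      =o[Filter.atTop] fun n : ℕ => Real.log n := by
  rw [Asymptotics.isLittleO_iff]
  intro c hc
  set ε := min (c / 2) (1 / 2) with hεdef
  have hε : 0 < ε := lt_min (by linarith) (by norm_num)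
  have hε1 : ε ≤ 1 / 2 := min_le_right _ _
  have hεc : 2 * ε ≤ c := by
    have := min_le_left (c / 2) (1 / 2)
    have : ε ≤ c / 2 := this
    linarith
  have hlog : Filter.Tendsto (fun n : ℕ => Real.log n) Filter.atTop Filter.atTop :=
    Real.tendsto_log_atTop.comp tendsto_natCast_atTop_atTop
  -- upper remainder tends to 0
  have hr0 : Filter.Tendsto
      (fun n : ℕ => (n : ℝ) * (m * (m * (1 + (1 + ε) * Real.log n) ^ (m - 1)
        * Real.exp (-((1 + ε) * Real.log n))))) Filter.atTop (nhds 0) := by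
    have hC : (0:ℝ) ≤ (m:ℝ) * m * 3 ^ (m - 1) := by positivity
    apply squeeze_zero'
    · filter_upwards [Filter.eventually_ge_atTop 1] with n hn
      have hn0 : (0:ℝ) < n := by exact_mod_cast hn
      have hlogn : 0 ≤ Real.log n := Real.log_nonneg (by exact_mod_cast hn)
      positivity
    · -- bound by C * (log n)^(m-1) / n^ε
      filter_upwards [hlog.eventually_ge_atTop 1, Filter.eventually_ge_atTop 1] with n hln hn
      have hn0 : (0:ℝ) < n := by exact_mod_cast hn
      have hexp : Real.exp (-((1 + ε) * Real.log n)) = (n:ℝ) ^ (-(1 + ε)) := by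
        rw [Real.rpow_def_of_pos hn0]
        ring_nf
      have hnn : (n:ℝ) * (n:ℝ) ^ (-(1 + ε)) = (n:ℝ) ^ (-ε) := by
        calc (n:ℝ) * (n:ℝ) ^ (-(1 + ε)) = (n:ℝ) ^ (1:ℝ) * (n:ℝ) ^ (-(1 + ε)) := by
              rw [Real.rpow_one]
          _ = (n:ℝ) ^ (1 + -(1 + ε)) := (Real.rpow_add hn0 _ _).symm
          _ = (n:ℝ) ^ (-ε) := by ring_nf
      have hbase : 1 + (1 + ε) * Real.log n ≤ 3 * Real.log n := by
        nlinarith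
      have hpow : (1 + (1 + ε) * Real.log n) ^ (m - 1)
          ≤ 3 ^ (m - 1) * (Real.log n) ^ (m - 1) := by
        rw [← mul_pow]
        exact pow_le_pow_left₀ (by nlinarith) hbase _
      have hrpos : (0:ℝ) < (n:ℝ) ^ (-ε) := Real.rpow_pos_of_pos hn0 _
      calc (n : ℝ) * (m * (m * (1 + (1 + ε) * Real.log n) ^ (m - 1)
            * Real.exp (-((1 + ε) * Real.log n))))
          = (m:ℝ) * m * (1 + (1 + ε) * Real.log n) ^ (m - 1)
            * ((n:ℝ) * Real.exp (-((1 + ε) * Real.log n))) := by ring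
        _ = (m:ℝ) * m * (1 + (1 + ε) * Real.log n) ^ (m - 1) * (n:ℝ) ^ (-ε) := by
            rw [hexp, hnn]
        _ ≤ (m:ℝ) * m * (3 ^ (m - 1) * (Real.log n) ^ (m - 1)) * (n:ℝ) ^ (-ε) := by
            apply mul_le_mul_of_nonneg_right _ (le_of_lt hrpos)
            apply mul_le_mul_of_nonneg_left hpow (by positivity)
        _ = ((m:ℝ) * m * 3 ^ (m - 1)) * ((Real.log n) ^ (m - 1) / (n:ℝ) ^ ε) := by
            rw [Real.rpow_neg (le_of_lt hn0), div_eq_mul_inv]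
            ring
    · have := (tendsto_pow_log_div_rpow_my (m - 1) hε).comp tendsto_natCast_atTop_atTop
      have h2 := this.const_mul ((m:ℝ) * m * 3 ^ (m - 1))
      simpa using h2
  -- lower remainder tends to 0
  have hpow : Filter.Tendsto (fun n : ℕ => (n:ℝ) * Real.exp (-((1 - ε) * Real.log n)))
      Filter.atTop Filter.atTop := by
    have h1 : Filter.Tendsto (fun n : ℕ => (n:ℝ) ^ (ε:ℝ)) Filter.atTop Filter.atTop :=
      (tendsto_rpow_atTop hε).comp tendsto_natCast_atTop_atTop
    apply h1.congr'
    filter_upwards [Filter.eventually_ge_atTop 1] with n hn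
    have hn0 : (0:ℝ) < n := by exact_mod_cast hn
    rw [Real.rpow_def_of_pos hn0]
    nth_rewrite 2 [(Real.exp_log hn0).symm]
    rw [← Real.exp_add]
    congr 1
    ring
  have hs0 : Filter.Tendsto
      (fun n : ℕ => Real.exp (-((n:ℝ) * Real.exp (-((1 - ε) * Real.log n)))))
      Filter.atTop (nhds 0) :=
    Real.tendsto_exp_atBot.comp (Filter.tendsto_neg_atTop_atBot.comp hpow)
  -- combine everything
  filter_upwards [hlog.eventually_ge_atTop 1, Filter.eventually_ge_atTop 1,
    hr0.eventually_le_const (by linarith : (0:ℝ) < ε),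
    hs0.eventually_le_const (by linarith : (0:ℝ) < ε)]
    with n hln hn hrn hsn
  have hT2 : (0:ℝ) < (1 + ε) * Real.log n := by nlinarith
  have hT1 : (0:ℝ) < (1 - ε) * Real.log n := by nlinarith
  have hupper := Vd_const_upper m n hT2
  have hlower := Vd_const_lower m n hm hT1
  have hub : Vd (fun _ : Fin n => m) - Real.log n ≤ c * Real.log n := by
    have : Vd (fun _ : Fin n => m) ≤ (1 + ε) * Real.log n + ε := le_trans hupper (by linarith)
    nlinarith
  have hlb : -(c * Real.log n) ≤ Vd (fun _ : Fin n => m) - Real.log n := by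
    have h1 : (1 - ε) * Real.log n * (1 - ε)
        ≤ (1 - ε) * Real.log n
          * (1 - Real.exp (-((n:ℝ) * Real.exp (-((1 - ε) * Real.log n))))) := by
      apply mul_le_mul_of_nonneg_left (by linarith) (le_of_lt hT1)
    have h2 : (1 - 2*ε) * Real.log n ≤ (1 - ε) * Real.log n * (1 - ε) := by
      nlinarith [mul_nonneg (mul_self_nonneg ε) (by linarith : (0:ℝ) ≤ Real.log n)]
    nlinarith [le_trans (le_trans h2 h1) hlower]
  rw [Real.norm_eq_abs, Real.norm_eq_abs, abs_of_nonneg (by linarith : (0:ℝ) ≤ Real.log n)]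
  exact abs_le.2 ⟨by linarith, hub⟩

end aux

/-- for fixed `m`, `min_S max_G E[C_{m,n}(G,S)] = max_G E[C_{m,n}(G,greedy)]`,
and this quantity is asymptotic to `log n` as `n → ∞`. -/
theorem stmt19 (m : ℕ) (hm : 0 < m) :
    (∀ n : ℕ, fopt (fun _ : Fin n => m) = fval greedy (fun _ : Fin n => m)) ∧
    Asymptotics.IsEquivalent Filter.atTop
      (fun n : ℕ => fval greedy (fun _ : Fin n => m))
      (fun n : ℕ => Real.log n) := by
  constructor
  · intro n
    exact fopt_eq_fval_greedy _
  · have h : (fun n : ℕ => fval greedy (fun _ : Fin n => m))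
        = fun n : ℕ => Vd (fun _ : Fin n => m) :=
      funext fun n => fval_greedy_eq_Vd _
    rw [Asymptotics.IsEquivalent, h]
    have := V_const_asymp m hm
    exact this.congr_left (fun n => by simp [Pi.sub_apply])
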